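/- Let L : V → V be a bounded Δ-preserving operator on a Δ-invariant space V, and suppose {a_j}_{j∈I} ⊆ ℓ²(Δ) are sequences of bounded spectrum with V_{a_j} := ker(L − Λ_{a_j}) such that V = ⊕̇_{j∈I} V_{a_j} (orthogonal direct sum). Then L = Σ_{j∈I} Λ_{a_j} P_{V_{a_j}}, where P_{V_{a_j}} is the orthogonal projection of V onto V_{a_j}, the series converging in the strong operator topology when I is infinite. -/

import Mathlib

open scoped InnerProductSpace

/-- if a bounded Δ-preserving operator `L` on a Δ-invariant space `V`
admits an orthogonal decomposition `V = ⊕̇_j V_{a_j}` into Δ-eigenspaces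
`V_{a_j} = ker(L − Λ_{a_j})`, then `L = Σ_j Λ_{a_j} P_{V_{a_j}}` in the strong
operator topology. Here `H` plays the role of `V`, `T` the translations, `Λ j`
the Δ-eigenvalue operators `Λ_{a_j}`, and `P j` the orthogonal projection onto
`ker (L - Λ j)`. -/
theorem stmt18 {H : Type*}
    [NormedAddCommGroup H] [InnerProductSpace ℂ H] [CompleteSpace H]
    {Δ : Type*} (T : Δ → (H ≃ₗᵢ[ℂ] H))
    {I : Type*} [Countable I]
    (L : H →L[ℂ] H) (hL : ∀ (k : Δ) (x : H), L (T k x) = T k (L x))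
    (Λ : I → (H →L[ℂ] H))
    (hΛ : ∀ (j : I) (k : Δ) (x : H), Λ j (T k x) = T k (Λ j x))
    (hne : ∀ j : I, LinearMap.ker ((L - Λ j : H →L[ℂ] H) : H →ₗ[ℂ] H) ≠ ⊥)
    (hortho : ∀ i j : I, i ≠ j → ∀ x ∈ LinearMap.ker ((L - Λ i : H →L[ℂ] H) : H →ₗ[ℂ] H),
      ∀ y ∈ LinearMap.ker ((L - Λ j : H →L[ℂ] H) : H →ₗ[ℂ] H), ⟪x, y⟫_ℂ = 0)
    (hdense : (⨆ j : I, LinearMap.ker ((L - Λ j : H →L[ℂ] H) : H →ₗ[ℂ] H)).topologicalClosure = ⊤)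
    (P : I → (H →L[ℂ] H))
    (hP : ∀ (j : I) (x : H), P j x ∈ LinearMap.ker ((L - Λ j : H →L[ℂ] H) : H →ₗ[ℂ] H) ∧
      ∀ y ∈ LinearMap.ker ((L - Λ j : H →L[ℂ] H) : H →ₗ[ℂ] H), ⟪x - P j x, y⟫_ℂ = 0) :
    ∀ f : H, HasSum (fun j : I => Λ j (P j f)) (L f) := by
  classical
  intro f
  set K : I → Submodule ℂ H := fun j => LinearMap.ker ((L - Λ j : H →L[ℂ] H) : H →ₗ[ℂ] H) with hK
  have hclosed : ∀ j, IsClosed (K j : Set H) := fun j =>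
    ContinuousLinearMap.isClosed_ker (L - Λ j)
  haveI : ∀ j, CompleteSpace (K j) := fun j => (hclosed j).completeSpace_coe
  have hOF : OrthogonalFamily ℂ (fun j => K j) (fun j => (K j).subtypeₗᵢ) := by
    intro i j hij v w
    exact hortho i j hij v v.2 w w.2
  have hHS : IsHilbertSum ℂ (fun j => K j) (fun j => (K j).subtypeₗᵢ) :=
    IsHilbertSum.mkInternal _ hOF (le_of_eq hdense.symm)
  set e := hHS.linearIsometryEquiv with he
  set g : I → H := fun j => ((e f j : K j) : H) with hg
  have hsum : HasSum g f := by
    have := hHS.hasSum_linearIsometryEquiv_symm (e f)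
    rw [← he, e.symm_apply_apply] at this
    exact this
  have hgP : ∀ j, g j = P j f := by
    intro j
    have hgmem : g j ∈ K j := (e f j).2
    have horthg : ∀ y ∈ K j, ⟪f - g j, y⟫_ℂ = 0 := by
      intro y hy
      have h1 : HasSum (fun i => ⟪y, g i⟫_ℂ) ⟪y, f⟫_ℂ :=
        (innerSL ℂ y).hasSum hsum
      have h2 : HasSum (fun i => ⟪y, g i⟫_ℂ) ⟪y, g j⟫_ℂ := by
        have heq : (fun i => ⟪y, g i⟫_ℂ) = fun i => if i = j then ⟪y, g j⟫_ℂ else 0 := by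
          funext i
          by_cases h : i = j
          · subst h; simp
          · simp only [h, if_false]
            exact hortho j i (Ne.symm h) y hy (g i) (e f i).2
        rw [heq]
        exact hasSum_ite_eq j _
      have h3 : ⟪y, f⟫_ℂ = ⟪y, g j⟫_ℂ := h1.unique h2
      have h4 : ⟪y, f - g j⟫_ℂ = 0 := by rw [inner_sub_right, h3, sub_self]
      calc ⟪f - g j, y⟫_ℂ = (starRingEnd ℂ) ⟪y, f - g j⟫_ℂ := (inner_conj_symm _ _).symm
        _ = 0 := by rw [h4, map_zero]
    have e1 : (K j).starProjection f = g j :=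
      Submodule.eq_starProjection_of_mem_of_inner_eq_zero hgmem horthg
    have e2 : (K j).starProjection f = P j f :=
      Submodule.eq_starProjection_of_mem_of_inner_eq_zero (hP j f).1 (hP j f).2
    rw [← e1, e2]
  have hLP : ∀ j, Λ j (P j f) = L (P j f) := by
    intro j
    have hm : P j f ∈ K j := (hP j f).1
    have : (L - Λ j) (P j f) = 0 := hm
    rw [ContinuousLinearMap.sub_apply, sub_eq_zero] at this
    exact this.symm
  have hfin : (fun j => Λ j (P j f)) = fun j => L (g j) := by
    funext j; rw [hLP j, hgP j]
  rw [hfin]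
  exact L.hasSum hsum
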